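/- Let E be a real inner product space and let α > 0 and β > 0. Define g on the open ball B = {y ∈ E : ‖y‖ < 1/β} by g(y) = (1 − (β·‖y‖)^α)^(−1/α) • y. Then g is strictly monotone on B: for all y₁, y₂ ∈ B with y₁ ≠ y₂, the inner product ⟨g(y₁) − g(y₂), y₁ − y₂⟩ is strictly positive. -/
import Mathlib


open Real Filter Topology Set
open scoped RealInnerProductSpace

/-- The hyperelastic response `g(y) = (1 - (β‖y‖)^α)^(-1/α) • y` is strictly
monotone on the open ball `{y : ‖y‖ < 1/β}`. -/
theorem hyperelastic_strictly_monotone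
    {E : Type*} [NormedAddCommGroup E] [InnerProductSpace ℝ E]
    (α β : ℝ) (hα : 0 < α) (hβ : 0 < β)
    (y₁ y₂ : E) (h₁ : ‖y₁‖ < 1 / β) (h₂ : ‖y₂‖ < 1 / β) (hne : y₁ ≠ y₂) :
    0 < ⟪(1 - (β * ‖y₁‖) ^ α) ^ (-1 / α) • y₁ -
          (1 - (β * ‖y₂‖) ^ α) ^ (-1 / α) • y₂, y₁ - y₂⟫ := by
  set a := ‖y₁‖ with ha'
  set b := ‖y₂‖ with hb'
  have ha : 0 ≤ a := norm_nonneg _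
  have hb : 0 ≤ b := norm_nonneg _
  have hbase : ∀ r : ℝ, 0 ≤ r → r < 1 / β → 0 < 1 - (β * r) ^ α := by
    intro r hr hr'
    have hlt : β * r < 1 := by
      have := (lt_div_iff₀ hβ).mp hr'
      linarith [mul_comm β r]
    have : (β * r) ^ α < 1 := Real.rpow_lt_one (by positivity) hlt hα
    linarith
  set f₁ : ℝ := (1 - (β * a) ^ α) ^ (-1 / α) with hf₁'
  set f₂ : ℝ := (1 - (β * b) ^ α) ^ (-1 / α) with hf₂'
  have hpos₁ : 0 < f₁ := Real.rpow_pos_of_pos (hbase a ha h₁) _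
  have hpos₂ : 0 < f₂ := Real.rpow_pos_of_pos (hbase b hb h₂) _
  have hneg : (-1 : ℝ) / α ≤ 0 := by
    apply div_nonpos_of_nonpos_of_nonneg <;> linarith
  have hmono : ∀ r s : ℝ, 0 ≤ r → r ≤ s → s < 1 / β →
      (1 - (β * r) ^ α) ^ (-1 / α) ≤ (1 - (β * s) ^ α) ^ (-1 / α) := by
    intro r s hr hrs hs
    apply Real.rpow_le_rpow_of_nonpos (hbase s (hr.trans hrs) hs) _ hneg
    have : (β * r) ^ α ≤ (β * s) ^ α :=
      Real.rpow_le_rpow (by positivity) (by nlinarith) hα.le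
    linarith
  set t := ⟪y₁, y₂⟫ with ht'
  have key : ⟪f₁ • y₁ - f₂ • y₂, y₁ - y₂⟫ = f₁ * (a * a) + f₂ * (b * b) - (f₁ + f₂) * t := by
    have hc : ⟪y₂, y₁⟫ = t := by rw [ht']; exact (real_inner_comm y₂ y₁).symm
    simp only [inner_sub_left, inner_sub_right, real_inner_smul_left,
      real_inner_self_eq_norm_mul_norm, ← ha', ← hb', ← ht', hc]
    ring
  rw [key]
  have ht : t ≤ a * b := real_inner_le_norm y₁ y₂
  have hd : 0 < a * a + b * b - 2 * t := by
    have h0 : 0 < ‖y₁ - y₂‖ := by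
      rw [norm_pos_iff, sub_ne_zero]; exact hne
    have h1 : ‖y₁ - y₂‖ ^ 2 = a ^ 2 - 2 * t + b ^ 2 := @norm_sub_sq_real E _ _ y₁ y₂
    nlinarith
  rcases lt_trichotomy a b with hab | hab | hab
  · have hf : f₁ ≤ f₂ := hmono a b ha hab.le h₂
    nlinarith [mul_pos hpos₁ (mul_pos (sub_pos.2 hab) (sub_pos.2 hab)),
      mul_nonneg (sub_nonneg.2 hf) (mul_nonneg hb (sub_nonneg.2 hab.le)),
      mul_le_mul_of_nonneg_left ht (by positivity : (0:ℝ) ≤ f₁ + f₂)]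
  · have hf : f₁ = f₂ := by rw [hf₁', hf₂', hab]
    nlinarith
  · have hf : f₂ ≤ f₁ := hmono b a hb hab.le h₁
    nlinarith [mul_pos hpos₂ (mul_pos (sub_pos.2 hab) (sub_pos.2 hab)),
      mul_nonneg (sub_nonneg.2 hf) (mul_nonneg ha (sub_nonneg.2 hab.le)),
      mul_le_mul_of_nonneg_left ht (by positivity : (0:ℝ) ≤ f₁ + f₂)]
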